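/- Smallness additivity for bushy trees: if B₁,…,B_n ⊆ ℕ^{<ℕ} are sets of strings and g₁,…,g_n : ℕ → ℕ are functions such that each B_i is g_i-small above a string σ, then ⋃_i B_i is (∑_i g_i)-small above σ. -/

import Mathlib

open Classical Filter

noncomputable section


/-- `T` is a finite tree `h`-bushy above `σ`: every element is increasing and
comparable with `σ`, and every non-leaf extending `σ` has at least `h(|τ|)`
immediate children. -/
def IsBushy (h : ℕ → ℕ) (σ : List ℕ) (T : Finset (List ℕ)) : Prop :=
  (∀ τ ∈ T, List.Pairwise (· < ·) τ ∧ (σ <+: τ ∨ τ <+: σ)) ∧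
  ∀ τ ∈ T, σ <+: τ → (∃ x : ℕ, τ ++ [x] ∈ T) →
    h τ.length ≤ {x : ℕ | τ ++ [x] ∈ T}.ncard

/-- `B` is `h`-big above `σ`: some finite tree `h`-bushy above `σ` has all its
leaves in `B`. -/
def BigAbove (h : ℕ → ℕ) (σ : List ℕ) (B : Set (List ℕ)) : Prop :=
  ∃ T : Finset (List ℕ), σ ∈ T ∧ IsBushy h σ T ∧
    ∀ τ ∈ T, (∀ x : ℕ, τ ++ [x] ∉ T) → τ ∈ B

/-- `B` is `h`-small above `σ`. -/
def SmallAbove (h : ℕ → ℕ) (σ : List ℕ) (B : Set (List ℕ)) : Prop :=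
  ¬ BigAbove h σ B

/-- Smallness additivity: a finite union of small sets is small for the sum of
the bounds. -/
theorem stmt8 (n : ℕ) (B : Fin n → Set (List ℕ)) (g : Fin n → ℕ → ℕ)
    (σ : List ℕ) (h : ∀ i, SmallAbove (g i) σ (B i)) :
    SmallAbove (fun m => ∑ i, g i m) σ (⋃ i, B i) := by
  rintro ⟨T, hσT, ⟨hTinc, hTbush⟩, hTleaf⟩
  set M := T.sup List.length with hM
  have hfin : ∀ (T' : Finset (List ℕ)) (ρ : List ℕ), {x : ℕ | ρ ++ [x] ∈ T'}.Finite := by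
    intro T' ρ
    have hsub : {x : ℕ | ρ ++ [x] ∈ T'} ⊆ (fun x => ρ ++ [x]) ⁻¹' ↑T' := fun x hx => hx
    refine Set.Finite.subset (Set.Finite.preimage ?_ T'.finite_toSet) hsub
    intro a _ b _ hab
    simpa using hab
  have key : ∀ k : ℕ, ∀ τ ∈ T, σ <+: τ → M + 1 - τ.length ≤ k →
      ∃ i, BigAbove (g i) τ (B i) := by
    intro k
    induction k with
    | zero =>
      intro τ hτ _ hk
      have : τ.length ≤ M := Finset.le_sup hτ
      omega
    | succ k ih =>
      intro τ hτ hστ hk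
      have hτsort := (hTinc τ hτ).1
      by_cases hleaf : ∀ x : ℕ, τ ++ [x] ∉ T
      · have hmem : τ ∈ ⋃ i, B i := hTleaf τ hτ hleaf
        obtain ⟨i, hi⟩ := Set.mem_iUnion.1 hmem
        refine ⟨i, {τ}, Finset.mem_singleton_self τ, ⟨?_, ?_⟩, ?_⟩
        · intro ρ hρ
          rw [Finset.mem_singleton] at hρ; subst hρ
          exact ⟨hτsort, Or.inl (List.prefix_refl _)⟩
        · rintro ρ hρ _ ⟨x, hx⟩
          rw [Finset.mem_singleton] at hρ
          subst hρ
          rw [Finset.mem_singleton] at hx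
          exact absurd (congrArg List.length hx) (by simp)
        · intro ρ hρ _
          rw [Finset.mem_singleton] at hρ; subst hρ; exact hi
      · push_neg at hleaf
        obtain ⟨x₀, hx₀⟩ := hleaf
        -- inductive hypothesis on children
        have hch : ∀ x : ℕ, τ ++ [x] ∈ T → ∃ i, BigAbove (g i) (τ ++ [x]) (B i) := by
          intro x hx
          refine ih (τ ++ [x]) hx (hστ.trans (List.prefix_append τ [x])) ?_
          have : (τ ++ [x]).length ≤ M := Finset.le_sup hx
          simp only [List.length_append, List.length_singleton] at this ⊢
          omega
        choose idx hidx using hch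
        haveI : Nonempty (Fin n) := ⟨idx x₀ hx₀⟩
        let i₀ : Fin n := Classical.arbitrary _
        let f : ℕ → Fin n := fun x => if hx : τ ++ [x] ∈ T then idx x hx else i₀
        let Cf : Finset ℕ := (hfin T τ).toFinset
        have hCf : ∀ x, x ∈ Cf ↔ τ ++ [x] ∈ T := by
          intro x; simp [Cf, Set.Finite.mem_toFinset]
        have hcard : ∑ i, g i τ.length ≤ Cf.card := by
          have := hTbush τ hτ hστ ⟨x₀, hx₀⟩
          rwa [Set.ncard_eq_toFinset_card _ (hfin T τ)] at this
        -- pigeonhole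
        have hpig : ∃ i : Fin n, g i τ.length ≤ (Cf.filter (fun x => f x = i)).card ∧
            (Cf.filter (fun x => f x = i)).Nonempty := by
          by_contra hcon
          push_neg at hcon
          have hfib : Cf.card = ∑ i : Fin n, (Cf.filter (fun x => f x = i)).card :=
            Finset.card_eq_sum_card_fiberwise (fun x _ => Finset.mem_univ (f x))
          have hlt : ∑ i : Fin n, (Cf.filter (fun x => f x = i)).card < ∑ i, g i τ.length := by
            refine Finset.sum_lt_sum (fun i _ => ?_) ⟨f x₀, Finset.mem_univ _, ?_⟩
            · rcases le_or_gt (g i τ.length) (Cf.filter (fun x => f x = i)).card with hle | hlt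
              · have h0 := hcon i hle
                simp [h0]
              · omega
            · rcases le_or_gt (g (f x₀) τ.length) (Cf.filter (fun x => f x = f x₀)).card with hle | hlt
              · exact absurd (hcon _ hle) (Finset.nonempty_iff_ne_empty.1 ⟨x₀, Finset.mem_filter.2 ⟨(hCf x₀).2 hx₀, rfl⟩⟩)
              · exact hlt
          omega
        obtain ⟨i, hScard, hSne⟩ := hpig
        set S : Finset ℕ := Cf.filter (fun x => f x = i) with hS
        have hSmem : ∀ x ∈ S, τ ++ [x] ∈ T ∧ f x = i := by
          intro x hx
          rw [hS, Finset.mem_filter] at hx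
          exact ⟨(hCf x).1 hx.1, hx.2⟩
        -- witness trees for selected children
        have hW : ∀ x, x ∈ S → ∃ T' : Finset (List ℕ), τ ++ [x] ∈ T' ∧
            IsBushy (g i) (τ ++ [x]) T' ∧
            ∀ ρ ∈ T', (∀ y : ℕ, ρ ++ [y] ∉ T') → ρ ∈ B i := by
          intro x hx
          obtain ⟨hxT, hfx⟩ := hSmem x hx
          have := hidx x hxT
          have hfx' : f x = idx x hxT := dif_pos hxT
          rw [hfx'] at hfx
          rw [hfx] at this
          exact this
        choose W hW1 hW2 hW3 using hW
        set T' : Finset (List ℕ) := insert τ (S.attach.biUnion fun x => W x.1 x.2) with hT'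
        have hmemT' : ∀ ρ, ρ ∈ T' ↔ ρ = τ ∨ ∃ x : {x // x ∈ S}, ρ ∈ W x.1 x.2 := by
          intro ρ
          simp [hT', Finset.mem_insert, Finset.mem_biUnion]
        have hWsub : ∀ (x : {x // x ∈ S}), ∀ ρ ∈ W x.1 x.2, ρ ∈ T' := by
          intro x ρ hρ
          exact (hmemT' ρ).2 (Or.inr ⟨x, hρ⟩)
        -- fact A
        have factA : ∀ (x : {x // x ∈ S}) ρ, ρ ∈ W x.1 x.2 → τ.length < ρ.length →
            τ ++ [x.1] <+: ρ := by
          rintro x ρ hρ hlen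
          rcases ((hW2 x.1 x.2).1 ρ hρ).2 with hp | hp
          · exact hp
          · have h1 : ρ.length ≤ τ.length + 1 := by
              have := hp.length_le
              simp only [List.length_append, List.length_singleton] at this
              omega
            have heq : ρ = τ ++ [x.1] :=
              hp.eq_of_length (by simp only [List.length_append, List.length_singleton]; omega)
            rw [heq]
        have uniq : ∀ (x x' : {x // x ∈ S}) ρ, ρ ∈ W x.1 x.2 → τ.length < ρ.length →
            τ ++ [x'.1] <+: ρ → x.1 = x'.1 := by
          intro x x' ρ hρ hlen hp'
          have hp := factA x ρ hρ hlen
          have : τ ++ [x.1] = τ ++ [x'.1] := by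
            have h1 : τ ++ [x.1] <+: τ ++ [x'.1] :=
              List.prefix_of_prefix_length_le hp hp' (by simp)
            exact h1.eq_of_length (by simp)
          have := List.append_cancel_left this
          simpa using this
        have hBig : BigAbove (g i) τ (B i) := by
          refine ⟨T', Finset.mem_insert_self _ _, ⟨?_, ?_⟩, ?_⟩
          · -- increasing + comparable
            intro ρ hρ
            rcases (hmemT' ρ).1 hρ with rfl | ⟨x, hx⟩
            · exact ⟨hτsort, Or.inl (List.prefix_refl _)⟩
            · refine ⟨((hW2 x.1 x.2).1 ρ hx).1, ?_⟩
              rcases le_or_gt ρ.length τ.length with hle | hlt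
              · right
                rcases ((hW2 x.1 x.2).1 ρ hx).2 with hp | hp
                · have := hp.length_le; simp at this; omega
                · exact List.prefix_of_prefix_length_le hp
                    (List.prefix_append τ [x.1]) hle
              · left
                exact (List.prefix_append τ [x.1]).trans (factA x ρ hx hlt)
          · -- bushiness
            rintro ρ hρ hτρ ⟨y, hy⟩
            by_cases hρτ : ρ = τ
            · subst hρτ
              have hsub : (↑S : Set ℕ) ⊆ {y : ℕ | ρ ++ [y] ∈ T'} := by
                intro z hz
                exact hWsub ⟨z, hz⟩ _ (hW1 z hz)
              calc g i ρ.length ≤ S.card := hScard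
                _ = (↑S : Set ℕ).ncard := (Set.ncard_coe_finset S).symm
                _ ≤ {y : ℕ | ρ ++ [y] ∈ T'}.ncard :=
                    Set.ncard_le_ncard hsub (hfin T' ρ)
            · obtain ⟨x, hx⟩ : ∃ x : {x // x ∈ S}, ρ ∈ W x.1 x.2 := by
                rcases (hmemT' ρ).1 hρ with h' | h'
                · exact absurd h' hρτ
                · exact h'
              have hlt : τ.length < ρ.length := by
                rcases eq_or_lt_of_le hτρ.length_le with he | hl
                · exact absurd (hτρ.eq_of_length he).symm hρτ
                · exact hl
              have hpx : τ ++ [x.1] <+: ρ := factA x ρ hx hlt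
              -- the child ρ ++ [y] is in the same witness tree
              have hyne : ρ ++ [y] ≠ τ := by
                intro hcon
                have := congrArg List.length hcon
                simp at this; omega
              obtain ⟨x', hx'⟩ : ∃ x' : {x // x ∈ S}, ρ ++ [y] ∈ W x'.1 x'.2 := by
                rcases (hmemT' (ρ ++ [y])).1 hy with h' | h'
                · exact absurd h' hyne
                · exact h'
              have hlen' : τ.length < (ρ ++ [y]).length := by simp; omega
              have hxx : x'.1 = x.1 :=
                uniq x' x (ρ ++ [y]) hx' hlen' (hpx.trans (List.prefix_append ρ [y]))
              have hyW : ρ ++ [y] ∈ W x.1 x.2 := by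
                have hxe : x' = x := Subtype.ext hxx
                rwa [hxe] at hx'
              have := (hW2 x.1 x.2).2 ρ hx hpx ⟨y, hyW⟩
              refine this.trans (Set.ncard_le_ncard ?_ (hfin T' ρ))
              intro z hz
              exact hWsub x _ hz
          · -- leaves
            intro ρ hρ hnoch
            by_cases hρτ : ρ = τ
            · exfalso
              obtain ⟨z, hz⟩ := hSne
              exact hnoch z (by rw [hρτ]; exact hWsub ⟨z, hz⟩ _ (hW1 z hz))
            · obtain ⟨x, hx⟩ : ∃ x : {x // x ∈ S}, ρ ∈ W x.1 x.2 := by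
                rcases (hmemT' ρ).1 hρ with h' | h'
                · exact absurd h' hρτ
                · exact h'
              exact hW3 x.1 x.2 ρ hx (fun y hy => hnoch y (hWsub x _ hy))
        exact ⟨i, hBig⟩
  obtain ⟨i, hbig⟩ := key (M + 1) σ hσT (List.prefix_refl σ) (by omega)
  exact h i hbig


end
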